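/- Let Y be a Young diagram with z steps. Then Y admits an (i,j)-local cover by generalized rectangles if and only if the staircase Y_z = {(s,t) ∈ [z]×[z] : s+t ≤ z+1} admits an (i,j)-local cover by generalized rectangles. -/

import Mathlib

open scoped Classical

/-- The staircase Young diagram `Y_z = {(s,t) ∈ [z]×[z] : s+t ≤ z+1}`. -/
def Yd (z : ℕ) : Set (ℕ × ℕ) :=
  {p | p.1 ∈ Set.Icc 1 z ∧ p.2 ∈ Set.Icc 1 z ∧ p.1 + p.2 ≤ z + 1}

/-- A Young diagram with `r` rows and `c` columns: a down-left closed subset of `[r]×[c]`. -/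
def IsYoung (r c : ℕ) (Y : Set (ℕ × ℕ)) : Prop :=
  Y ⊆ Set.Icc 1 r ×ˢ Set.Icc 1 c ∧
  ∀ p ∈ Y, (2 ≤ p.1 → (p.1 - 1, p.2) ∈ Y) ∧ (2 ≤ p.2 → (p.1, p.2 - 1) ∈ Y)

/-- A step of `Y`: an element whose right and upper neighbours are outside `Y`. -/
def IsStep (Y : Set (ℕ × ℕ)) (p : ℕ × ℕ) : Prop :=
  p ∈ Y ∧ (p.1 + 1, p.2) ∉ Y ∧ (p.1, p.2 + 1) ∉ Y

def steps (Y : Set (ℕ × ℕ)) : Set (ℕ × ℕ) := {p | IsStep Y p}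

/-- A generalized rectangle in `Y`: a product set contained in `Y`. -/
def IsRect (Y R : Set (ℕ × ℕ)) : Prop :=
  (∃ S T : Set ℕ, R = S ×ˢ T) ∧ R ⊆ Y

/-- An actual rectangle in `Y`: a product of intervals contained in `Y`. -/
def IsActualRect (Y R : Set (ℕ × ℕ)) : Prop :=
  (∃ a b u v : ℕ, R = Set.Icc a b ×ˢ Set.Icc u v) ∧ R ⊆ Y

def UsesRow (R : Set (ℕ × ℕ)) (s : ℕ) : Prop := ∃ t, (s, t) ∈ R
def UsesCol (R : Set (ℕ × ℕ)) (t : ℕ) : Prop := ∃ s, (s, t) ∈ R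

/-- A cover of `Y` by generalized rectangles. -/
def IsCover (Y : Set (ℕ × ℕ)) (C : Finset (Set (ℕ × ℕ))) : Prop :=
  (∀ R ∈ C, IsRect Y R) ∧ (⋃ R ∈ C, R) = Y

/-- `(i,j)`-locality: each row used by at most `i`, each column by at most `j` rectangles. -/
def IsLocal (i j : ℕ) (C : Finset (Set (ℕ × ℕ))) : Prop :=
  (∀ s, (C.filter (fun R => UsesRow R s)).card ≤ i) ∧
  (∀ t, (C.filter (fun R => UsesCol R t)).card ≤ j)

def IsLocalCover (i j : ℕ) (Y : Set (ℕ × ℕ)) (C : Finset (Set (ℕ × ℕ))) : Prop :=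
  IsCover Y C ∧ IsLocal i j C

private lemma transfer_lemma (i j : ℕ) (Y Y' : Set (ℕ × ℕ)) (φ ψ : ℕ → ℕ)
    (h : ∀ s t : ℕ, (s, t) ∈ Y ↔ (φ s, ψ t) ∈ Y') :
    (∃ C, IsLocalCover i j Y' C) → (∃ C, IsLocalCover i j Y C) := by
  rintro ⟨C, ⟨⟨hrect, hcov⟩, hrow, hcol⟩⟩
  refine ⟨C.image (fun R => Prod.map φ ψ ⁻¹' R), ⟨⟨?_, ?_⟩, ?_, ?_⟩⟩
  · rintro R hR
    simp only [Finset.mem_image] at hR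
    obtain ⟨R₀, hR₀, rfl⟩ := hR
    obtain ⟨⟨S, T, rfl⟩, hsub⟩ := hrect R₀ hR₀
    refine ⟨⟨φ ⁻¹' S, ψ ⁻¹' T, ?_⟩, ?_⟩
    · ext ⟨s, t⟩; simp [Prod.map]
    · rintro ⟨s, t⟩ hst
      exact (h s t).2 (hsub hst)
  · ext ⟨s, t⟩
    simp only [Set.mem_iUnion, Finset.mem_image, exists_prop, Set.mem_preimage]
    constructor
    · rintro ⟨R, ⟨R₀, hR₀, rfl⟩, hm⟩
      exact (h s t).2 (by rw [← hcov]; exact Set.mem_iUnion₂.2 ⟨R₀, hR₀, hm⟩)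
    · intro hm
      have : (φ s, ψ t) ∈ ⋃ R ∈ C, R := by rw [hcov]; exact (h s t).1 hm
      obtain ⟨R₀, hR₀, hm'⟩ := Set.mem_iUnion₂.1 this
      exact ⟨_, ⟨R₀, hR₀, rfl⟩, hm'⟩
  · intro s
    calc ((C.image (fun R => Prod.map φ ψ ⁻¹' R)).filter (fun R => UsesRow R s)).card
        ≤ ((C.filter (fun R => UsesRow R (φ s))).image (fun R => Prod.map φ ψ ⁻¹' R)).card := by
          apply Finset.card_le_card
          intro R hR
          obtain ⟨hR1, hR2⟩ := Finset.mem_filter.1 hR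
          obtain ⟨R₀, hR₀, rfl⟩ := Finset.mem_image.1 hR1
          obtain ⟨t, ht⟩ := hR2
          exact Finset.mem_image.2 ⟨R₀, Finset.mem_filter.2 ⟨hR₀, ⟨ψ t, ht⟩⟩, rfl⟩
      _ ≤ (C.filter (fun R => UsesRow R (φ s))).card := Finset.card_image_le
      _ ≤ i := hrow (φ s)
  · intro t
    calc ((C.image (fun R => Prod.map φ ψ ⁻¹' R)).filter (fun R => UsesCol R t)).card
        ≤ ((C.filter (fun R => UsesCol R (ψ t))).image (fun R => Prod.map φ ψ ⁻¹' R)).card := by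
          apply Finset.card_le_card
          intro R hR
          obtain ⟨hR1, hR2⟩ := Finset.mem_filter.1 hR
          obtain ⟨R₀, hR₀, rfl⟩ := Finset.mem_image.1 hR1
          obtain ⟨s, hs⟩ := hR2
          exact Finset.mem_image.2 ⟨R₀, Finset.mem_filter.2 ⟨hR₀, ⟨φ s, hs⟩⟩, rfl⟩
      _ ≤ (C.filter (fun R => UsesCol R (ψ t))).card := Finset.card_image_le
      _ ≤ j := hcol (ψ t)

private lemma exists_equiv (z r c : ℕ) (Y : Set (ℕ × ℕ)) (hY : IsYoung r c Y)
    (hz : (steps Y).ncard = z) :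
    (∃ φ ψ : ℕ → ℕ, ∀ s t, (s, t) ∈ Y ↔ (φ s, ψ t) ∈ Yd z) ∧
    (∃ φ ψ : ℕ → ℕ, ∀ a b, (a, b) ∈ Yd z ↔ (φ a, ψ b) ∈ Y) := by
  obtain ⟨hbox, hclos⟩ := hY
  -- the row length function
  set lam : ℕ → ℕ := fun s => ((Finset.range (c + 1)).filter (fun t => (s, t) ∈ Y)).sup id
    with hlam_def
  -- downward closure in second coordinate
  have hdown : ∀ (s t' n : ℕ), 1 ≤ t' → (s, t' + n) ∈ Y → (s, t') ∈ Y := by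
    intro s t' n ht'
    induction n with
    | zero => exact fun h => h
    | succ n ih =>
      intro h
      have h2 : (2 : ℕ) ≤ t' + (n + 1) := by omega
      have := (hclos _ h).2 h2
      simp only at this
      have heq : t' + (n + 1) - 1 = t' + n := by omega
      rw [heq] at this
      exact ih this
  -- membership characterization
  have hmem : ∀ s t : ℕ, (s, t) ∈ Y ↔ 1 ≤ t ∧ t ≤ lam s := by
    intro s t
    constructor
    · intro h
      have hb := hbox h
      simp only [Set.mem_prod, Set.mem_Icc] at hb
      refine ⟨hb.2.1, ?_⟩
      have : t ∈ (Finset.range (c + 1)).filter (fun t => (s, t) ∈ Y) := by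
        simp only [Finset.mem_filter, Finset.mem_range]
        exact ⟨by omega, h⟩
      exact Finset.le_sup (f := id) this
    · rintro ⟨h1, h2⟩
      have hne : ((Finset.range (c + 1)).filter (fun t => (s, t) ∈ Y)).Nonempty := by
        by_contra hemp
        rw [Finset.not_nonempty_iff_eq_empty] at hemp
        have : lam s = 0 := by rw [hlam_def]; simp [hemp]
        omega
      obtain ⟨b, hb, hbe⟩ := Finset.exists_mem_eq_sup _ hne id
      have hbY : (s, b) ∈ Y := (Finset.mem_filter.1 hb).2
      have hbl : lam s = b := hbe
      have : (s, t + (lam s - t)) ∈ Y := by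
        have : t + (lam s - t) = b := by omega
        rw [this]; exact hbY
      exact hdown s t (lam s - t) h1 this
  -- monotonicity
  have hstep_mono : ∀ s : ℕ, 1 ≤ s → lam (s + 1) ≤ lam s := by
    intro s hs
    rcases Nat.eq_zero_or_pos (lam (s + 1)) with h | h
    · omega
    · have hY1 : (s + 1, lam (s + 1)) ∈ Y := (hmem _ _).2 ⟨h, le_refl _⟩
      have := (hclos _ hY1).1 (by omega)
      simp only [Nat.add_sub_cancel] at this
      exact ((hmem _ _).1 this).2
  have hmono : ∀ s s' : ℕ, 1 ≤ s → s ≤ s' → lam s' ≤ lam s := by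
    intro s s' hs hss
    induction s', hss using Nat.le_induction with
    | base => exact le_refl _
    | succ n hn ih => exact le_trans (hstep_mono n (by omega)) ih
  -- descent positions
  set P : ℕ → Prop := fun s => lam (s + 1) < lam s with hP_def
  have hP1 : ∀ s, P s → 1 ≤ s ∧ s ≤ r ∧ 1 ≤ lam s := by
    intro s hs
    have hs' : lam (s + 1) < lam s := hs
    have hl : 1 ≤ lam s := by omega
    have hsY : (s, lam s) ∈ Y := (hmem _ _).2 ⟨hl, le_refl _⟩
    have hb := hbox hsY
    simp only [Set.mem_prod, Set.mem_Icc] at hb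
    exact ⟨hb.1.1, hb.1.2, hl⟩
  have hf : (setOf P).Finite :=
    (Set.finite_Icc 1 r).subset (fun s hs => Set.mem_Icc.2 ⟨(hP1 s hs).1, (hP1 s hs).2.1⟩)
  -- steps = image of descent set
  have hsteps : steps Y = (fun s => (s, lam s)) '' setOf P := by
    ext ⟨s, t⟩
    simp only [steps, IsStep, Set.mem_setOf_eq, Set.mem_image]
    constructor
    · rintro ⟨h1, h2, h3⟩
      rw [hmem] at h1
      rw [hmem] at h2 h3
      push_neg at h2 h3
      have ht : t = lam s := by
        have := h3 (by omega)
        omega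
      have hps : P s := by
        show lam (s + 1) < lam s
        have := h2 h1.1
        omega
      exact ⟨s, hps, by rw [ht]⟩
    · rintro ⟨x, hx, heq⟩
      have hxs : x = s := congrArg Prod.fst heq
      have hlt : lam x = t := congrArg Prod.snd heq
      subst hxs
      subst hlt
      have hx' : lam (x + 1) < lam x := hx
      have hl := (hP1 _ hx).2.2
      refine ⟨(hmem _ _).2 ⟨hl, le_refl _⟩, ?_, ?_⟩
      · rw [hmem]
        omega
      · rw [hmem]
        omega
  have hcard : hf.toFinset.card = z := by
    have hinj : Function.Injective (fun s : ℕ => (s, lam s)) := by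
      intro a b hab
      exact congrArg Prod.fst hab
    rw [hsteps, Set.ncard_image_of_injective _ hinj] at hz
    rwa [Set.ncard_eq_toFinset_card _ hf] at hz
  set d : ℕ → ℕ := Nat.nth P with hd_def
  have hd_mem : ∀ a, a < z → P (d a) := fun a ha =>
    Nat.nth_mem_of_lt_card hf (lt_of_lt_of_eq ha hcard.symm)
  have hd_lt : ∀ a b, a < b → b < z → d a < d b := fun a b hab hb =>
    Nat.nth_lt_nth_of_lt_card hf hab (lt_of_lt_of_eq hb hcard.symm)
  have hcnt_d : ∀ a, a < z → Nat.count P (d a) = a := fun a ha =>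
    Nat.count_nth_of_lt_card_finite hf (lt_of_lt_of_eq ha hcard.symm)
  have hlam_d_pos : ∀ a, a < z → 1 ≤ lam (d a) := fun a ha => (hP1 _ (hd_mem a ha)).2.2
  -- constancy between descents
  have hconst : ∀ s k : ℕ, 1 ≤ s → (∀ m, s ≤ m → m < s + k → ¬ P m) → lam (s + k) = lam s := by
    intro s k hs
    induction k with
    | zero => intro _; rfl
    | succ k ih =>
      intro hno
      have h1 : lam (s + k + 1) = lam (s + k) := by
        have hnp : ¬ P (s + k) := hno (s + k) (by omega) (by omega)
        have hle : lam (s + k + 1) ≤ lam (s + k) := hstep_mono (s + k) (by omega)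
        have : ¬ lam (s + k + 1) < lam (s + k) := hnp
        omega
      have h2 : lam (s + k) = lam s := ih (fun m hm hm' => hno m hm (by omega))
      have : s + (k + 1) = s + k + 1 := by omega
      rw [this, h1, h2]
  have hzero : ∀ s, r < s → lam s = 0 := by
    intro s hs
    by_contra h
    have hl : 1 ≤ lam s := by omega
    have := hbox ((hmem s (lam s)).2 ⟨hl, le_refl _⟩)
    simp only [Set.mem_prod, Set.mem_Icc] at this
    omega
  have hallzero : ∀ s, 1 ≤ s → (∀ m, s ≤ m → ¬ P m) → lam s = 0 := by
    intro s hs hno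
    have h1 : lam (s + (r + 1)) = lam s := hconst s (r + 1) hs (fun m hm _ => hno m hm)
    have h2 : lam (s + (r + 1)) = 0 := hzero _ (by omega)
    omega
  have hbig : ∀ s, 1 ≤ s → z ≤ Nat.count P s → lam s = 0 := by
    intro s hs hcnt
    apply hallzero s hs
    intro m hm hPm
    have h1 : Nat.count P m < hf.toFinset.card := Nat.count_lt_card hf hPm
    have h2 : Nat.count P s ≤ Nat.count P m := Nat.count_monotone P hm
    omega
  have hK1 : ∀ s, 1 ≤ s → Nat.count P s < z → lam s = lam (d (Nat.count P s)) := by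
    intro s hs hcnt
    set k := Nat.count P s with hk
    have hne : {i : ℕ | P i ∧ s ≤ i}.Nonempty := by
      by_contra hemp
      push_neg at hemp
      simp only [Set.not_nonempty_iff_eq_empty, Set.eq_empty_iff_forall_notMem,
        Set.mem_setOf_eq, not_and, not_le] at hemp
      have hsub : hf.toFinset ⊆ (Finset.range s).filter (fun x => P x) := by
        intro x hx
        have hPx : P x := (Set.Finite.mem_toFinset hf).1 hx
        exact Finset.mem_filter.2 ⟨Finset.mem_range.2 (hemp x hPx), hPx⟩
      have := Finset.card_le_card hsub
      rw [hcard] at this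
      rw [Nat.count_eq_card_filter_range] at hk
      omega
    have hsInf := Nat.nth_count_eq_sInf (p := P) s
    have hmem' : d k ∈ {i : ℕ | P i ∧ s ≤ i} := by
      rw [hd_def, hsInf]
      exact Nat.sInf_mem hne
    obtain ⟨hPd, hsd⟩ := hmem'
    have hnob : ∀ m, s ≤ m → m < d k → ¬ P m := by
      intro m hm hmd hPm
      have : d k ≤ m := by
        rw [hd_def, hsInf]
        exact Nat.sInf_le ⟨hPm, hm⟩
      omega
    have := hconst s (d k - s) hs (fun m hm hm' => hnob m hm (by omega))
    have heq : s + (d k - s) = d k := by omega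
    rw [heq] at this
    omega
  -- strict decrease of lam along d
  have hdec_strict : ∀ a b, a < b → b < z → lam (d b) < lam (d a) := by
    intro a b hab hb
    have h1 : d a < d b := hd_lt a b hab hb
    have h2 : lam (d b) ≤ lam (d a + 1) := hmono (d a + 1) (d b) (by omega) (by omega)
    have h3 : lam (d a + 1) < lam (d a) := hd_mem a (by omega)
    omega
  have hdec : ∀ a b, a < z → b < z → (lam (d b) ≤ lam (d a) ↔ a ≤ b) := by
    intro a b ha hb
    constructor
    · intro h
      by_contra hba
      have := hdec_strict b a (by omega) ha
      omega
    · intro h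
      rcases Nat.lt_or_ge a b with h' | h'
      · exact le_of_lt (hdec_strict a b h' hb)
      · have : a = b := by omega
        rw [this]
  -- column counting function
  set B : ℕ → ℕ := fun t => ((Finset.range z).filter (fun a => lam (d a) < t)).card with hB_def
  have hBz : ∀ t, B t ≤ z := by
    intro t
    calc B t ≤ (Finset.range z).card := Finset.card_filter_le _ _
      _ = z := Finset.card_range z
  have hB : ∀ t a₀, a₀ < z → (t ≤ lam (d a₀) ↔ B t + a₀ + 1 ≤ z) := by
    intro t a₀ ha₀
    constructor
    · intro h
      have hsub : (Finset.range z).filter (fun a => lam (d a) < t) ⊆ Finset.Ioo a₀ z := by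
        intro a ha
        obtain ⟨ha1, ha2⟩ := Finset.mem_filter.1 ha
        have haz : a < z := Finset.mem_range.1 ha1
        have : ¬ a ≤ a₀ := by
          intro hle
          have : lam (d a₀) ≤ lam (d a) := (hdec a a₀ haz ha₀).2 hle
          omega
        exact Finset.mem_Ioo.2 ⟨by omega, haz⟩
      have := Finset.card_le_card hsub
      rw [Nat.card_Ioo] at this
      have hBt : B t ≤ z - a₀ - 1 := by rw [hB_def]; exact this
      omega
    · intro h
      by_contra hc
      push_neg at hc
      have hsub : Finset.Icc a₀ (z - 1) ⊆ (Finset.range z).filter (fun a => lam (d a) < t) := by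
        intro a ha
        obtain ⟨ha1, ha2⟩ := Finset.mem_Icc.1 ha
        have haz : a < z := by omega
        have : lam (d a) ≤ lam (d a₀) := (hdec a₀ a ha₀ haz).2 ha1
        refine Finset.mem_filter.2 ⟨Finset.mem_range.2 haz, by omega⟩
      have := Finset.card_le_card hsub
      rw [Nat.card_Icc] at this
      have hBt : z - 1 + 1 - a₀ ≤ B t := by rw [hB_def]; exact this
      omega
  -- the box for a point in Y
  have hboxY : ∀ s t, (s, t) ∈ Y → 1 ≤ s ∧ s ≤ r ∧ 1 ≤ t ∧ t ≤ c := by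
    intro s t h
    have := hbox h
    simp only [Set.mem_prod, Set.mem_Icc] at this
    exact ⟨this.1.1, this.1.2, this.2.1, this.2.2⟩
  have hYd_mem : ∀ a b : ℕ, (a, b) ∈ Yd z ↔ (1 ≤ a ∧ a ≤ z) ∧ (1 ≤ b ∧ b ≤ z) ∧ a + b ≤ z + 1 := by
    intro a b
    simp [Yd, Set.mem_Icc]
  constructor
  · -- maps Y → Yd z
    refine ⟨fun s => if s = 0 then 0 else Nat.count P s + 1,
            fun t => if t = 0 then 0 else B t + 1, ?_⟩
    intro s t
    rcases Nat.eq_zero_or_pos s with rfl | hs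
    · simp only [reduceIte, hYd_mem]
      constructor
      · intro h; exact absurd (hboxY _ _ h).1 (by omega)
      · omega
    rcases Nat.eq_zero_or_pos t with rfl | ht
    · simp only [reduceIte, hYd_mem]
      constructor
      · intro h; exact absurd (hboxY _ _ h).2.2.1 (by omega)
      · omega
    simp only [if_neg (by omega : ¬ s = 0), if_neg (by omega : ¬ t = 0), hYd_mem, hmem]
    rcases Nat.lt_or_ge (Nat.count P s) z with hcnt | hcnt
    · have hK := hK1 s hs hcnt
      have hiff := hB t (Nat.count P s) hcnt
      constructor
      · rintro ⟨h1, h2⟩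
        rw [hK] at h2
        have h3 := hiff.1 h2
        have h4 : t ≤ lam (d 0) := le_trans h2 ((hdec 0 (Nat.count P s) (by omega) hcnt).2 (by omega))
        have h5 := (hB t 0 (by omega)).1 h4
        omega
      · rintro ⟨_, _, h3⟩
        have : B t + Nat.count P s + 1 ≤ z := by omega
        have h4 := hiff.2 this
        rw [hK]
        exact ⟨ht, h4⟩
    · have h0 : lam s = 0 := hbig s hs hcnt
      constructor
      · intro h; omega
      · intro h; omega
  · -- maps Yd z → Y
    refine ⟨fun a => if a = 0 then 0 else if a ≤ z then d (a - 1) else r + 1,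
            fun b => if b = 0 then 0 else if b ≤ z then lam (d (z - b)) else c + 1, ?_⟩
    intro a b
    rcases Nat.eq_zero_or_pos a with rfl | ha
    · simp only [reduceIte, hYd_mem]
      constructor
      · omega
      · intro h; exact absurd (hboxY _ _ h).1 (by omega)
    rcases Nat.eq_zero_or_pos b with rfl | hb
    · simp only [reduceIte, hYd_mem]
      constructor
      · omega
      · intro h; exact absurd (hboxY _ _ h).2.2.1 (by omega)
    simp only [if_neg (by omega : ¬ a = 0), if_neg (by omega : ¬ b = 0)]
    rcases Nat.lt_or_ge z a with haz | haz
    · simp only [if_neg (by omega : ¬ a ≤ z), hYd_mem]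
      constructor
      · omega
      · intro h; exact absurd (hboxY _ _ h).2.1 (by omega)
    rcases Nat.lt_or_ge z b with hbz | hbz
    · simp only [if_neg (by omega : ¬ b ≤ z), if_pos haz, hYd_mem]
      constructor
      · omega
      · intro h; exact absurd (hboxY _ _ h).2.2.2 (by omega)
    simp only [if_pos haz, if_pos hbz, hYd_mem, hmem]
    have hza : a - 1 < z := by omega
    have hzb : z - b < z := by omega
    have hpos : 1 ≤ lam (d (z - b)) := hlam_d_pos _ hzb
    have hiff := hdec (a - 1) (z - b) hza hzb
    constructor
    · rintro ⟨_, _, h3⟩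
      exact ⟨hpos, hiff.2 (by omega)⟩
    · rintro ⟨_, h2⟩
      have := hiff.1 h2
      omega

theorem local_cover_iff_staircase (i j z r c : ℕ) (Y : Set (ℕ × ℕ))
    (hY : IsYoung r c Y) (hz : (steps Y).ncard = z) :
    (∃ C : Finset (Set (ℕ × ℕ)), IsLocalCover i j Y C) ↔
    (∃ C : Finset (Set (ℕ × ℕ)), IsLocalCover i j (Yd z) C) := by
  obtain ⟨h1, h2⟩ := exists_equiv z r c Y hY hz
  constructor
  · intro h
    obtain ⟨φ, ψ, hφψ⟩ := h2
    exact transfer_lemma i j (Yd z) Y φ ψ hφψ h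
  · intro h
    obtain ⟨φ, ψ, hφψ⟩ := h1
    exact transfer_lemma i j Y (Yd z) φ ψ hφψ h
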